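/- Monotonicity of robust length: if P is a u-t path and P' is a v-t path that is a subpath of P (i.e., P' = P[v,t] for some vertex v on P), then Val(P) ≥ Val(P'), assuming all edge weights are nonnegative. -/
import Mathlib


open scoped ENNReal

noncomputable section

/-- The length of a walk w.r.t. edge weights `ℓ`. -/
def wlen {V : Type*} {G : SimpleGraph V} (ℓ : Sym2 V → ℝ≥0∞) {u v : V} (p : G.Walk u v) : ℝ≥0∞ :=
  (p.edges.map ℓ).sum

/-- Weighted shortest-path distance in `G`. -/
def wdist {V : Type*} (G : SimpleGraph V) (ℓ : Sym2 V → ℝ≥0∞) (u v : V) : ℝ≥0∞ :=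
  ⨅ p : G.Walk u v, wlen ℓ p

/-- `s_u^{-e}`: the shortest `u`-`t` distance in `G` with edge `e` removed. -/
def sval {V : Type*} (G : SimpleGraph V) (ℓ : Sym2 V → ℝ≥0∞) (t : V) (e : Sym2 V) (u : V) :
    ℝ≥0∞ :=
  wdist (G.deleteEdges {e}) ℓ u t

/-- The supremum, over edges `uu'` of the walk (u nearer the start), of
`ℓ(P[v,u]) + s_u^{-uu'}`. -/
def detourSup {V : Type*} (G : SimpleGraph V) (ℓ : Sym2 V → ℝ≥0∞) (t : V) :
    ∀ {v : V}, G.Walk v t → ℝ≥0∞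
  | _, SimpleGraph.Walk.nil => 0
  | v, @SimpleGraph.Walk.cons _ _ _ w _ _h p =>
      max (sval G ℓ t s(v, w) v) (ℓ s(v, w) + detourSup G ℓ t p)

/-- The robust length `Val(P)` of a `v`-`t` walk `P`. -/
def rVal {V : Type*} (G : SimpleGraph V) (ℓ : Sym2 V → ℝ≥0∞) (t : V) {v : V}
    (p : G.Walk v t) : ℝ≥0∞ :=
  max (wlen ℓ p) (detourSup G ℓ t p)

/-- The potential `y(v)`: minimum robust length over all simple `v`-`t` paths. -/
def pot {V : Type*} (G : SimpleGraph V) (ℓ : Sym2 V → ℝ≥0∞) (t v : V) : ℝ≥0∞ :=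
  ⨅ p : {p : G.Walk v t // p.IsPath}, rVal G ℓ t p.1

lemma rVal_le_cons {V : Type*} (G : SimpleGraph V) (ℓ : Sym2 V → ℝ≥0∞) (t : V)
    {a b : V} (h : G.Adj a b) (p : G.Walk b t) :
    rVal G ℓ t p ≤ rVal G ℓ t (SimpleGraph.Walk.cons h p) := by
  unfold rVal
  apply max_le
  · refine le_trans ?_ (le_max_left _ _)
    simp only [wlen, SimpleGraph.Walk.edges_cons, List.map_cons, List.sum_cons]
    exact le_add_self
  · refine le_trans ?_ (le_max_right _ _)
    simp only [detourSup]
    exact le_trans le_add_self (le_max_right _ _)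

lemma rVal_dropUntil_le {V : Type*} [DecidableEq V] (G : SimpleGraph V)
    (ℓ : Sym2 V → ℝ≥0∞) (v : V) :
    ∀ {u t : V} (P : G.Walk u t) (hv : v ∈ P.support),
      rVal G ℓ t (P.dropUntil v hv) ≤ rVal G ℓ t P
  | u, _, SimpleGraph.Walk.nil, hv => by
    have := SimpleGraph.Walk.mem_support_nil_iff.mp hv
    subst this
    simp [SimpleGraph.Walk.dropUntil]
  | u, t, SimpleGraph.Walk.cons h p, hv => by
    by_cases hx : u = v
    · subst hx
      simp [SimpleGraph.Walk.dropUntil]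
    · have hv' : v ∈ p.support := by
        cases hv with
        | head => exact (hx rfl).elim
        | tail _ h' => exact h'
      rw [show (SimpleGraph.Walk.cons h p).dropUntil v hv = p.dropUntil v hv' from by
        simp [SimpleGraph.Walk.dropUntil, hx]]
      exact le_trans (rVal_dropUntil_le G ℓ v p hv') (rVal_le_cons G ℓ t h p)

/-- Monotonicity of robust length: if `P` is a `u`-`t` path and
`P' = P[v,t]` is a subpath of `P` (from a vertex `v` on `P` to `t`), then
`Val(P) ≥ Val(P')`. -/
theorem robust_length_monotone {V : Type*} [Fintype V] [DecidableEq V]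
    (G : SimpleGraph V) (ℓ : Sym2 V → ℝ≥0∞) (t u v : V)
    (P : G.Walk u t) (hP : P.IsPath) (hv : v ∈ P.support) :
    rVal G ℓ t (P.dropUntil v hv) ≤ rVal G ℓ t P :=
  rVal_dropUntil_le G ℓ v P hv
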